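/- Let R be an associative unital F-algebra containing a U_q(su(2)) triple k, k⁻¹, j₊, j₋, and let τ = (τ₋₁, τ₀, τ₁) and τ' = (τ'₋₁, τ'₀, τ'₁) be two vector operators in R, i.e. triples satisfying (with τ₂ = τ₋₂ = 0 and likewise for τ'): k τ_A k⁻¹ = s^A τ_A, j₊ τ_A k⁻¹ − s k⁻¹ τ_A j₊ = c·τ_{A+1} for A = −1, 0 and = 0 for A = 1, and j₋ τ_A k⁻¹ − s⁻¹ k⁻¹ τ_A j₋ = c·τ_{A−1} for A = 0, 1 and = 0 for A = −1. Then the quantum scalar product O = Σ_{m = −1,0,1} (−1)^{1−m} s^m τ_m τ'_{−m} is a scalar operator: k O k⁻¹ = O, j₊ O k⁻¹ − s k⁻¹ O j₊ = 0, and j₋ O k⁻¹ − s⁻¹ k⁻¹ O j₋ = 0. -/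

import Mathlib

/-!
STATEMENT 9: the quantum scalar product of two vector operators is a scalar operator.
-/

variable {F : Type} [Field F] {R : Type} [Ring R] [Algebra F R]

lemma key_raise (s c sa sb : F) (hs : s ≠ 0) (hsa : sa ≠ 0)
    (k ki jp : R) (hkki : k * ki = 1) (hkik : ki * k = 1)
    (hjp : k * jp * ki = s • jp)
    (τa τb τa1 τb1 : R)
    (hka : k * τa * ki = sa • τa) (hkb : k * τb * ki = sb • τb)
    (hpa : jp * τa * ki - s • (ki * τa * jp) = c • τa1)
    (hpb : jp * τb * ki - s • (ki * τb * jp) = c • τb1) :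
    jp * (τa * τb) * ki - s • (ki * (τa * τb) * jp)
      = (c * sb) • (τa1 * τb) + (c * sa⁻¹) • (τa * τb1) := by
  -- k * jp = s • (jp * k)
  have kjp : k * jp = s • (jp * k) := by
    have := congrArg (· * k) hjp
    simpa [mul_assoc, hkik, smul_mul_assoc] using this
  have ka : k * τa = sa • (τa * k) := by
    have := congrArg (· * k) hka
    simpa [mul_assoc, hkik, smul_mul_assoc] using this
  -- τa * ki = sa • (ki * τa)
  have kia : τa * ki = sa • (ki * τa) := by
    have := congrArg (ki * ·) hka
    simpa [← mul_assoc, hkik, mul_smul_comm] using this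
  have kia' : ki * τa = sa⁻¹ • (τa * ki) := by
    exact ((inv_smul_eq_iff₀ hsa).mpr kia).symm
  -- τa = sa • (ki * (τa * k))
  have taa : τa = sa • (ki * (τa * k)) := by
    have := congrArg (· * k) kia
    simpa [mul_assoc, hkik, mul_smul_comm] using this
  have pa' : jp * τa * ki = s • (ki * τa * jp) + c • τa1 := by
    rw [← hpa]; abel
  have pb' : ki * τb * jp = s⁻¹ • (jp * τb * ki) - (s⁻¹ * c) • τb1 := by
    have h1 : s • (ki * τb * jp) = jp * τb * ki - c • τb1 := by
      rw [← hpb]; abel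
    rw [mul_smul, ← smul_sub, ← h1, inv_smul_smul₀ hs]
  -- first piece
  have e1 : jp * (τa * τb) * ki = (sb * s) • (ki * τa * jp * τb) + (sb * c) • (τa1 * τb) := by
    have : jp * (τa * τb) * ki = (jp * τa * ki) * (k * τb * ki) := by
      simp only [mul_assoc]
      rw [← mul_assoc ki k, hkik, one_mul]
    rw [this, hkb, pa', mul_smul_comm, add_mul, smul_mul_assoc, smul_mul_assoc,
      smul_add, smul_smul, smul_smul]
  -- second piece
  have e2 : s • (ki * (τa * τb) * jp) = (sb * s) • (ki * τa * jp * τb) - (sa⁻¹ * c) • (τa * τb1) := by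
    have h1 : ki * (τa * τb) * jp = sa⁻¹ • (τa * (ki * τb * jp)) := by
      calc ki * (τa * τb) * jp = (ki * τa) * (τb * jp) := by simp [mul_assoc]
        _ = sa⁻¹ • (τa * ki * (τb * jp)) := by rw [kia', smul_mul_assoc]
        _ = sa⁻¹ • (τa * (ki * τb * jp)) := by simp [mul_assoc]
    have h2 : τa * (jp * τb * ki) = (sa * s * sb) • (ki * τa * jp * τb) := by
      calc τa * (jp * τb * ki) = (sa • (ki * (τa * k))) * (jp * τb * ki) := by rw [← taa]
        _ = sa • (ki * (τa * (k * jp)) * (τb * ki)) := by simp [smul_mul_assoc, mul_assoc]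
        _ = (sa * s) • (ki * τa * jp * (k * τb * ki)) := by
            rw [kjp]; simp [mul_smul_comm, smul_smul, mul_assoc]
        _ = (sa * s * sb) • (ki * τa * jp * τb) := by
            rw [hkb]; simp [mul_smul_comm, smul_smul, mul_assoc]
    rw [h1, pb']
    simp only [mul_sub, smul_sub, mul_smul_comm, smul_smul]
    rw [h2]
    simp only [smul_smul]
    match_scalars <;> field_simp <;> ring
  rw [e1, e2]
  module

theorem scalar_product_of_vector_operators_is_scalar (s c : F)
    (hs : s ≠ 0) (hs' : s - s⁻¹ ≠ 0) (hc : c ≠ 0) (hc2 : c ^ 2 = s + s⁻¹)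
    (k ki jp jm : R)
    (hkki : k * ki = 1) (hkik : ki * k = 1)
    (hjp : k * jp * ki = s • jp) (hjm : k * jm * ki = s⁻¹ • jm)
    (hcomm : jp * jm - jm * jp = (s - s⁻¹)⁻¹ • (k ^ 2 - ki ^ 2))
    -- τ is a vector operator
    (τm τ0 τ1 : R)
    (hτK1 : k * τ1 * ki = s • τ1) (hτK0 : k * τ0 * ki = τ0) (hτKm : k * τm * ki = s⁻¹ • τm)
    (hτpm : jp * τm * ki - s • (ki * τm * jp) = c • τ0)
    (hτp0 : jp * τ0 * ki - s • (ki * τ0 * jp) = c • τ1)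
    (hτp1 : jp * τ1 * ki - s • (ki * τ1 * jp) = 0)
    (hτm1 : jm * τ1 * ki - s⁻¹ • (ki * τ1 * jm) = c • τ0)
    (hτm0 : jm * τ0 * ki - s⁻¹ • (ki * τ0 * jm) = c • τm)
    (hτmm : jm * τm * ki - s⁻¹ • (ki * τm * jm) = 0)
    -- τ' is a vector operator
    (τ'm τ'0 τ'1 : R)
    (hτ'K1 : k * τ'1 * ki = s • τ'1) (hτ'K0 : k * τ'0 * ki = τ'0)
    (hτ'Km : k * τ'm * ki = s⁻¹ • τ'm)
    (hτ'pm : jp * τ'm * ki - s • (ki * τ'm * jp) = c • τ'0)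
    (hτ'p0 : jp * τ'0 * ki - s • (ki * τ'0 * jp) = c • τ'1)
    (hτ'p1 : jp * τ'1 * ki - s • (ki * τ'1 * jp) = 0)
    (hτ'm1 : jm * τ'1 * ki - s⁻¹ • (ki * τ'1 * jm) = c • τ'0)
    (hτ'm0 : jm * τ'0 * ki - s⁻¹ • (ki * τ'0 * jm) = c • τ'm)
    (hτ'mm : jm * τ'm * ki - s⁻¹ • (ki * τ'm * jm) = 0)
    -- the quantum scalar product
    (O : R) (hO : O = s • (τ1 * τ'm) - τ0 * τ'0 + s⁻¹ • (τm * τ'1)) :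
    k * O * ki = O ∧
    jp * O * ki - s • (ki * O * jp) = 0 ∧
    jm * O * ki - s⁻¹ • (ki * O * jm) = 0 := by
  have hsi : s⁻¹ ≠ 0 := inv_ne_zero hs
  have h1 : (1:F) ≠ 0 := one_ne_zero
  have hτK0' : k * τ0 * ki = (1:F) • τ0 := by rw [one_smul]; exact hτK0
  have hτ'K0' : k * τ'0 * ki = (1:F) • τ'0 := by rw [one_smul]; exact hτ'K0
  have hτp1' : jp * τ1 * ki - s • (ki * τ1 * jp) = c • (0:R) := by rw [smul_zero]; exact hτp1
  have hτ'p1' : jp * τ'1 * ki - s • (ki * τ'1 * jp) = c • (0:R) := by rw [smul_zero]; exact hτ'p1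
  have hτmm' : jm * τm * ki - s⁻¹ • (ki * τm * jm) = c • (0:R) := by rw [smul_zero]; exact hτmm
  have hτ'mm' : jm * τ'm * ki - s⁻¹ • (ki * τ'm * jm) = c • (0:R) := by rw [smul_zero]; exact hτ'mm
  have conj : ∀ x y : R, k * (x * y) * ki = (k * x * ki) * (k * y * ki) := by
    intro x y
    simp only [mul_assoc]
    rw [← mul_assoc ki k, hkik, one_mul]
  refine ⟨?_, ?_, ?_⟩
  · rw [hO]
    simp only [mul_sub, sub_mul, mul_add, add_mul, mul_smul_comm, smul_mul_assoc]
    rw [conj τ1 τ'm, conj τ0 τ'0, conj τm τ'1, hτK1, hτK0, hτKm, hτ'K1, hτ'K0, hτ'Km]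
    simp only [smul_mul_assoc, mul_smul_comm, smul_smul]
    match_scalars <;> field_simp
  · have K1 := key_raise s c s s⁻¹ hs hs k ki jp hkki hkik hjp τ1 τ'm 0 τ'0
      hτK1 hτ'Km hτp1' hτ'pm
    have K2 := key_raise s c 1 1 hs h1 k ki jp hkki hkik hjp τ0 τ'0 τ1 τ'1
      hτK0' hτ'K0' hτp0 hτ'p0
    have K3 := key_raise s c s⁻¹ s hs hsi k ki jp hkki hkik hjp τm τ'1 τ0 0
      hτKm hτ'K1 hτpm hτ'p1'
    have expand : jp * O * ki - s • (ki * O * jp)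
        = s • (jp * (τ1 * τ'm) * ki - s • (ki * (τ1 * τ'm) * jp))
          - (jp * (τ0 * τ'0) * ki - s • (ki * (τ0 * τ'0) * jp))
          + s⁻¹ • (jp * (τm * τ'1) * ki - s • (ki * (τm * τ'1) * jp)) := by
      rw [hO]
      simp only [mul_sub, sub_mul, mul_add, add_mul, smul_sub, smul_add,
        mul_smul_comm, smul_mul_assoc, smul_smul]
      module
    rw [expand, K1, K2, K3]
    simp only [zero_mul, mul_zero, smul_zero, smul_add, smul_smul, zero_add, add_zero]
    match_scalars <;> field_simp <;> ring
  · have K1 := key_raise s⁻¹ c s s⁻¹ hsi hs k ki jm hkki hkik hjm τ1 τ'm τ0 0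
      hτK1 hτ'Km hτm1 hτ'mm'
    have K2 := key_raise s⁻¹ c 1 1 hsi h1 k ki jm hkki hkik hjm τ0 τ'0 τm τ'm
      hτK0' hτ'K0' hτm0 hτ'm0
    have K3 := key_raise s⁻¹ c s⁻¹ s hsi hsi k ki jm hkki hkik hjm τm τ'1 0 τ'0
      hτKm hτ'K1 hτmm' hτ'm1
    have expand : jm * O * ki - s⁻¹ • (ki * O * jm)
        = s • (jm * (τ1 * τ'm) * ki - s⁻¹ • (ki * (τ1 * τ'm) * jm))
          - (jm * (τ0 * τ'0) * ki - s⁻¹ • (ki * (τ0 * τ'0) * jm))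
          + s⁻¹ • (jm * (τm * τ'1) * ki - s⁻¹ • (ki * (τm * τ'1) * jm)) := by
      rw [hO]
      simp only [mul_sub, sub_mul, mul_add, add_mul, smul_sub, smul_add,
        mul_smul_comm, smul_mul_assoc, smul_smul]
      module
    rw [expand, K1, K2, K3]
    simp only [zero_mul, mul_zero, smul_zero, smul_add, smul_smul, zero_add, add_zero]
    match_scalars <;> field_simp <;> ring
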